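/- Let ν > 0 and let M be a random variable taking values in the positive integers with lim_{x→∞} (log P[M > x]) / x = −α for some α > 0. Define the random variable T on the positive integers by P[T > t] = E[ (1 − M e^{−(M−1)ν}(1 − e^{−ν}) )^t ] for t ∈ ℕ. Then lim_{t→∞} (log P[T > t]) / (log t) = −α/ν. -/

import Mathlib

open MeasureTheory Filter

private lemma auxq (q : ℝ) (h0 : 0 ≤ q) (h1 : q ≤ 1) :
    ∀ k : ℕ, ((k : ℝ) + 1) * (1 - q) * q ^ k ≤ 1 - q ^ (k + 1) := by
  intro k
  induction k with
  | zero => simp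
  | succ n ih =>
    have hqn : 0 ≤ q ^ n := pow_nonneg h0 n
    have hqn1 : q ^ n * q ≤ 1 := by
      calc q ^ n * q ≤ 1 * 1 := mul_le_mul (pow_le_one₀ h0 h1) h1 h0 zero_le_one
        _ = 1 := by ring
    have h2 := mul_le_mul_of_nonneg_right ih h0
    simp only [pow_succ] at *
    push_cast
    nlinarith [mul_nonneg hqn h0, h2, hqn1, h0, h1]

private lemma lin_le_exp (a D K C : ℝ) (ha : 0 < a) (hD : 0 < D) :
    ∀ᶠ z : ℝ in atTop, K * z + C ≤ D * Real.exp (a * z) := by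
  filter_upwards [eventually_ge_atTop (max 1 (4 * (|K| + |C|) / (D * a ^ 2)))] with z hz
  have hz1 : (1 : ℝ) ≤ z := le_trans (le_max_left _ _) hz
  have hz0 : (0 : ℝ) ≤ z := by linarith
  have hda : (0 : ℝ) < D * a ^ 2 := by positivity
  have hz2 : 4 * (|K| + |C|) / (D * a ^ 2) ≤ z := le_trans (le_max_right _ _) hz
  have h2 : 4 * (|K| + |C|) ≤ z * (D * a ^ 2) := by rwa [div_le_iff₀ hda] at hz2
  have hexp : a * z / 2 ≤ Real.exp (a * z / 2) := by
    linarith [Real.add_one_le_exp (a * z / 2)]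
  have hq : (a * z / 2) ^ 2 ≤ Real.exp (a * z / 2) ^ 2 := by
    apply pow_le_pow_left₀ (by positivity) hexp
  have hee : Real.exp (a * z / 2) ^ 2 = Real.exp (a * z) := by
    rw [← Real.exp_nat_mul]
    congr 1
    push_cast
    ring
  have hK : K * z ≤ |K| * z := mul_le_mul_of_nonneg_right (le_abs_self K) hz0
  have hC : C ≤ |C| := le_abs_self C
  have h3 : 4 * (|K| + |C|) * z ≤ z * (D * a ^ 2) * z :=
    mul_le_mul_of_nonneg_right h2 hz0
  nlinarith [hq, hee, hD.le, abs_nonneg K, abs_nonneg C]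

private lemma coef1 (α ε ν δ : ℝ) (hν : 0 < ν) (hε : 0 < ε)
    (hδε : δ * (α + 2) ≤ ε * ν / 4) (hδδ : δ * δ ≤ δ) :
    -(α / ν) - (3/4) * ε ≤ ((-α - δ) * (1 + δ)) / ν := by
  have hc1 : -α - (3/4) * (ε * ν) ≤ (-α - δ) * (1 + δ) := by
    nlinarith [hδε, hδδ, mul_pos hε hν]
  have hsimp : (-α - (3/4) * (ε * ν)) / ν = -(α / ν) - (3/4) * ε := by
    field_simp
  rw [← hsimp]
  exact (div_le_div_iff_of_pos_right hν).mpr hc1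

private lemma coef2 (α ε ν δ : ℝ) (hν : 0 < ν) (hε : 0 < ε)
    (hδε : δ * (α + 2) ≤ ε * ν / 4) (hδ0 : 0 ≤ δ) :
    ((-α + δ) * (1 - δ)) / ν ≤ -(α / ν) + (3/4) * ε := by
  have hc2 : (-α + δ) * (1 - δ) ≤ -α + (3/4) * (ε * ν) := by
    nlinarith [hδε, mul_pos hε hν, sq_nonneg δ]
  have hsimp2 : (-α + (3/4) * (ε * ν)) / ν = -(α / ν) + (3/4) * ε := by
    field_simp
  rw [← hsimp2]
  exact (div_le_div_iff_of_pos_right hν).mpr hc2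

set_option maxHeartbeats 2000000 in
/-- Theorem 5 (T-part, eq. (33)): in slotted ALOHA with a random number `M` of backlogged
users having an asymptotically exponential tail of rate `α`, the time `T` between successes
with `P[T > t] = E[(1 - M e^{-(M-1)ν}(1-e^{-ν}))^t]` has a power law tail of index `α/ν`. -/
theorem stmt10 {Ω : Type*} {mΩ : MeasurableSpace Ω} (P : Measure Ω) [IsProbabilityMeasure P]
    (ν α : ℝ) (hν : 0 < ν) (hα : 0 < α)
    (M : Ω → ℕ) (hMm : Measurable M) (hMpos : ∀ ω, 1 ≤ M ω)
    (htail : Tendsto (fun x : ℝ => Real.log (P {ω | (M ω : ℝ) > x}).toReal / x) atTop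
      (nhds (-α))) :
    Tendsto (fun t : ℕ =>
        Real.log (∫ ω,
            (1 - (M ω : ℝ) * Real.exp (-((M ω : ℝ) - 1) * ν) * (1 - Real.exp (-ν))) ^ t ∂P)
          / Real.log t) atTop (nhds (-(α / ν))) := by
  classical
  have hq0 : (0 : ℝ) < Real.exp (-ν) := Real.exp_pos _
  have hq1 : Real.exp (-ν) < 1 := Real.exp_lt_one_iff.mpr (by linarith)
  set c₀ : ℝ := 1 - Real.exp (-ν) with hc₀def
  have hc₀ : 0 < c₀ := by rw [hc₀def]; linarith
  have hc₀1 : c₀ < 1 := by rw [hc₀def]; linarith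
  set cE : ℝ := 1 / (ν * Real.exp 1) with hcEdef
  have hcE : 0 < cE := by rw [hcEdef]; positivity
  set c₁ : ℝ := Real.exp ν * c₀ with hc₁def
  have hc₁ : 0 < c₁ := mul_pos (Real.exp_pos _) hc₀
  clear_value c₀ cE c₁
  set g : ℕ → Ω → ℝ :=
    fun t ω => (1 - (M ω : ℝ) * Real.exp (-((M ω : ℝ) - 1) * ν) * c₀) ^ t with hg
  show Tendsto (fun t : ℕ => Real.log (∫ ω, g t ω ∂P) / Real.log t) atTop (nhds (-(α / ν)))
  clear_value g
  -- basic bounds on the per-user probability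
  have hp0 : ∀ m : ℕ, 0 ≤ (m : ℝ) * Real.exp (-((m : ℝ) - 1) * ν) * c₀ := fun m =>
    mul_nonneg (mul_nonneg (Nat.cast_nonneg m) (Real.exp_pos _).le) hc₀.le
  have hple : ∀ m : ℕ,
      (m : ℝ) * Real.exp (-((m : ℝ) - 1) * ν) * c₀ ≤ 1 - Real.exp (-(ν * (m : ℝ))) := by
    intro m
    cases m with
    | zero => simp
    | succ k =>
      have hkey := auxq (Real.exp (-ν)) hq0.le hq1.le k
      have e1 : Real.exp (-((((k + 1 : ℕ)) : ℝ) - 1) * ν) = Real.exp (-ν) ^ k := by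
        rw [← Real.exp_nat_mul]
        congr 1
        push_cast
        ring
      have e2 : Real.exp (-(ν * (((k + 1 : ℕ)) : ℝ))) = Real.exp (-ν) ^ (k + 1) := by
        rw [← Real.exp_nat_mul]
        congr 1
        push_cast
        ring
      rw [e1, e2, hc₀def]
      push_cast
      linear_combination hkey
  have hgpos : ∀ t (ω : Ω), 0 < g t ω := by
    intro t ω
    simp only [hg]
    apply pow_pos
    have := hple (M ω)
    have := Real.exp_pos (-(ν * (M ω : ℝ)))
    linarith
  have hgle1 : ∀ t (ω : Ω), g t ω ≤ 1 := by
    intro t ω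
    simp only [hg]
    apply pow_le_one₀
    · have := hple (M ω)
      have := Real.exp_pos (-(ν * (M ω : ℝ)))
      linarith
    · linarith [hp0 (M ω)]
  have hmeas : ∀ t : ℕ, Measurable (g t) := by
    intro t
    have h : g t = (fun m : ℕ => (1 - (m : ℝ) * Real.exp (-((m : ℝ) - 1) * ν) * c₀) ^ t) ∘ M := by
      rw [hg]; rfl
    rw [h]
    exact measurable_from_top.comp hMm
  have hInt : ∀ t : ℕ, Integrable (g t) P := by
    intro t
    refine (integrable_const (1 : ℝ)).mono' ((hmeas t).aestronglyMeasurable) ?_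
    filter_upwards with ω
    rw [Real.norm_eq_abs, abs_of_nonneg (hgpos t ω).le]
    exact hgle1 t ω
  have hfpos : ∀ t : ℕ, 0 < ∫ ω, g t ω ∂P := by
    intro t
    rw [integral_pos_iff_support_of_nonneg_ae
      (Eventually.of_forall (fun ω => (hgpos t ω).le)) (hInt t)]
    have hsupp : Function.support (g t) = Set.univ :=
      Set.eq_univ_of_forall (fun ω => (hgpos t ω).ne')
    rw [hsupp]
    simp
  -- bound on remaining-users probability from above, for m ≥ x
  have hue : ∀ u : ℝ, 0 ≤ u → u * Real.exp (-(ν * u)) ≤ cE := by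
    intro u hu
    have h := Real.add_one_le_exp (ν * u - 1)
    have e1 : Real.exp (ν * u - 1) * Real.exp 1 = Real.exp (ν * u) := by
      rw [← Real.exp_add]; ring_nf
    have hkey : u * (ν * Real.exp 1) ≤ Real.exp (ν * u) := by
      nlinarith [Real.exp_pos (1 : ℝ), mul_le_mul_of_nonneg_right h (Real.exp_pos 1).le]
    rw [hcEdef, le_div_iff₀ (by positivity : (0:ℝ) < ν * Real.exp 1)]
    have h2 : Real.exp (ν * u) * Real.exp (-(ν * u)) = 1 := by
      rw [← Real.exp_add]; simp
    nlinarith [Real.exp_pos (-(ν * u)),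
      mul_le_mul_of_nonneg_right hkey (Real.exp_pos (-(ν * u))).le]
  have hkeyub : ∀ (x : ℝ) (m : ℕ), 0 ≤ x → x ≤ (m : ℝ) →
      (m : ℝ) * Real.exp (-((m : ℝ) - 1) * ν) * c₀
        ≤ c₁ * ((x + cE) * Real.exp (-(ν * x))) := by
    intro x m hx hxm
    have e2 : Real.exp (-((m : ℝ) - 1) * ν) = Real.exp (-(ν * (m : ℝ))) * Real.exp ν := by
      rw [← Real.exp_add]; congr 1; ring
    have h1 := hue ((m : ℝ) - x) (by linarith)
    have e1 : Real.exp (-(ν * ((m : ℝ) - x))) * Real.exp (-(ν * x))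
        = Real.exp (-(ν * (m : ℝ))) := by
      rw [← Real.exp_add]; congr 1; ring
    have h2 : (m : ℝ) * Real.exp (-(ν * (m : ℝ))) ≤ (x + cE) * Real.exp (-(ν * x)) := by
      have h3 : ((m : ℝ) - x) * Real.exp (-(ν * ((m : ℝ) - x))) * Real.exp (-(ν * x))
          ≤ cE * Real.exp (-(ν * x)) :=
        mul_le_mul_of_nonneg_right h1 (Real.exp_pos _).le
      have h4 : x * Real.exp (-(ν * (m : ℝ))) ≤ x * Real.exp (-(ν * x)) := by
        apply mul_le_mul_of_nonneg_left _ hx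
        apply Real.exp_le_exp.mpr
        nlinarith [mul_le_mul_of_nonneg_left hxm hν.le]
      have h5 : (m : ℝ) * Real.exp (-(ν * (m : ℝ)))
          = ((m : ℝ) - x) * Real.exp (-(ν * ((m : ℝ) - x))) * Real.exp (-(ν * x))
            + x * Real.exp (-(ν * (m : ℝ))) := by
        rw [mul_assoc, e1]; ring
      rw [h5]; linarith
    calc (m : ℝ) * Real.exp (-((m : ℝ) - 1) * ν) * c₀
        = ((m : ℝ) * Real.exp (-(ν * (m : ℝ)))) * (Real.exp ν * c₀) := by rw [e2]; ring
      _ ≤ ((x + cE) * Real.exp (-(ν * x))) * (Real.exp ν * c₀) := by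
          apply mul_le_mul_of_nonneg_right h2
          exact (mul_pos (Real.exp_pos _) hc₀).le
      _ = c₁ * ((x + cE) * Real.exp (-(ν * x))) := by rw [hc₁def]; ring
  -- bound from below, for 1 ≤ m ≤ x
  have hpge : ∀ (x : ℝ) (m : ℕ), 1 ≤ m → (m : ℝ) ≤ x →
      c₀ * Real.exp (-(ν * x)) ≤ (m : ℝ) * Real.exp (-((m : ℝ) - 1) * ν) * c₀ := by
    intro x m hm hmx
    have h1 : (1 : ℝ) ≤ (m : ℝ) := by exact_mod_cast hm
    have h2 : Real.exp (-(ν * x)) ≤ Real.exp (-((m : ℝ) - 1) * ν) := by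
      apply Real.exp_le_exp.mpr
      nlinarith [mul_le_mul_of_nonneg_left hmx hν.le]
    calc c₀ * Real.exp (-(ν * x)) = 1 * Real.exp (-(ν * x)) * c₀ := by ring
      _ ≤ (m : ℝ) * Real.exp (-((m : ℝ) - 1) * ν) * c₀ := by
          apply mul_le_mul_of_nonneg_right _ hc₀.le
          exact mul_le_mul h1 h2 (Real.exp_pos _).le (by linarith)
  -- main argument
  rw [Metric.tendsto_nhds]
  intro ε hε
  set δ : ℝ := min (min (1/2) (α/2)) (ε * ν / (4 * (α + 2))) with hδdef
  have hδ0 : 0 < δ := by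
    apply lt_min (lt_min (by norm_num) (by linarith))
    positivity
  have hδh : δ ≤ 1/2 := le_trans (min_le_left _ _) (min_le_left _ _)
  have hδα : δ ≤ α/2 := le_trans (min_le_left _ _) (min_le_right _ _)
  have hδε : δ * (α + 2) ≤ ε * ν / 4 := by
    have h := min_le_right (min (1/2) (α/2)) (ε * ν / (4 * (α + 2)))
    rw [← hδdef] at h
    rw [le_div_iff₀ (by positivity : (0:ℝ) < 4 * (α + 2))] at h
    nlinarith
  have hδδ : δ * δ ≤ δ := by nlinarith
  clear_value δ
  -- tail bounds
  have htail' : ∀ᶠ x : ℝ in atTop,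
      Real.exp ((-α - δ) * x) ≤ (P {ω | (M ω : ℝ) > x}).toReal ∧
      (P {ω | (M ω : ℝ) > x}).toReal ≤ Real.exp ((-α + δ) * x) := by
    have h1 := (Metric.tendsto_nhds.mp htail) δ hδ0
    filter_upwards [h1, eventually_ge_atTop (1 : ℝ)] with x hx hx1
    have hx0 : (0 : ℝ) < x := lt_of_lt_of_le one_pos hx1
    rw [Real.dist_eq] at hx
    have habs := abs_lt.mp hx
    have h3 : Real.log (P {ω | (M ω : ℝ) > x}).toReal < (-α + δ) * x := by
      have h4 : Real.log (P {ω | (M ω : ℝ) > x}).toReal / x < -α + δ := by linarith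
      calc Real.log (P {ω | (M ω : ℝ) > x}).toReal
          = (Real.log (P {ω | (M ω : ℝ) > x}).toReal / x) * x := by field_simp
        _ < (-α + δ) * x := mul_lt_mul_of_pos_right h4 hx0
    have h5 : (-α - δ) * x < Real.log (P {ω | (M ω : ℝ) > x}).toReal := by
      have h4 : -α - δ < Real.log (P {ω | (M ω : ℝ) > x}).toReal / x := by linarith
      calc (-α - δ) * x
          < (Real.log (P {ω | (M ω : ℝ) > x}).toReal / x) * x :=
            mul_lt_mul_of_pos_right h4 hx0
        _ = Real.log (P {ω | (M ω : ℝ) > x}).toReal := by field_simp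
    have hLneg : Real.log (P {ω | (M ω : ℝ) > x}).toReal < 0 := by
      apply lt_of_lt_of_le h3
      nlinarith
    have hP0 : 0 < (P {ω | (M ω : ℝ) > x}).toReal := by
      rcases lt_or_eq_of_le (ENNReal.toReal_nonneg (a := P {ω | (M ω : ℝ) > x})) with h | h
      · exact h
      · exfalso
        rw [← h, Real.log_zero] at hLneg
        exact lt_irrefl 0 hLneg
    have hexp : Real.exp (Real.log (P {ω | (M ω : ℝ) > x}).toReal)
        = (P {ω | (M ω : ℝ) > x}).toReal := Real.exp_log hP0
    constructor
    · calc Real.exp ((-α - δ) * x)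
          ≤ Real.exp (Real.log (P {ω | (M ω : ℝ) > x}).toReal) := Real.exp_le_exp.mpr h5.le
        _ = _ := hexp
    · calc (P {ω | (M ω : ℝ) > x}).toReal
          = Real.exp (Real.log (P {ω | (M ω : ℝ) > x}).toReal) := hexp.symm
        _ ≤ Real.exp ((-α + δ) * x) := Real.exp_le_exp.mpr h3.le
  have hlogt : Tendsto (fun t : ℕ => Real.log t) atTop atTop :=
    Real.tendsto_log_atTop.comp tendsto_natCast_atTop_atTop
  -- SIDE 1 : lower bound
  have hb : (0 : ℝ) < (1 + δ) / ν := by positivity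
  have hx1 : Tendsto (fun t : ℕ => ((1 + δ) / ν) * Real.log t) atTop atTop :=
    hlogt.const_mul_atTop hb
  have side1 : ∀ᶠ t : ℕ in atTop,
      -(α / ν) - ε < Real.log (∫ ω, g t ω ∂P) / Real.log t := by
    have E2 := hx1.eventually htail'
    have E3 := hlogt.eventually
      (lin_le_exp δ (1/2) (c₁ * ((1 + δ) / ν)) (c₁ * cE) hδ0 (by norm_num))
    have E4 := hlogt.eventually (eventually_ge_atTop (max 1 (8 * Real.log 2 / ε)))
    have E5 := hx1.eventually (eventually_ge_atTop (1 : ℝ))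
    filter_upwards [E2, E3, E4, E5, eventually_ge_atTop 1] with t hE2 hE3 hE4 hE5 ht1
    set lt := Real.log (t : ℝ) with hltdef
    set X := ((1 + δ) / ν) * lt with hXdef
    clear_value lt X
    have hlt1 : 1 ≤ lt := le_trans (le_max_left _ _) hE4
    have hlt0 : 0 < lt := lt_of_lt_of_le one_pos hlt1
    have hX1 : (1 : ℝ) ≤ X := hE5
    have hX0 : (0 : ℝ) ≤ X := by linarith
    have ht0 : (0 : ℝ) < (t : ℝ) := by
      have : (1 : ℝ) ≤ (t : ℝ) := by exact_mod_cast ht1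
      linarith
    have hexplt : Real.exp lt = (t : ℝ) := by rw [hltdef]; exact Real.exp_log ht0
    have hνX : ν * X = (1 + δ) * lt := by
      rw [hXdef]; field_simp
    have hA : MeasurableSet {ω | (M ω : ℝ) > X} :=
      measurableSet_lt measurable_const (measurable_from_top.comp hMm)
    have e3 : Real.exp lt * Real.exp (-(ν * X)) = Real.exp (-(δ * lt)) := by
      rw [← Real.exp_add]; congr 1; rw [hνX]; ring
    have e4 : (t : ℝ) * (c₁ * ((X + cE) * Real.exp (-(ν * X))))
        = (c₁ * (X + cE)) * Real.exp (-(δ * lt)) := by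
      rw [← hexplt, ← e3]; ring
    have e5 : c₁ * (X + cE) = c₁ * ((1 + δ) / ν) * lt + c₁ * cE := by
      rw [hXdef]; ring
    have htp : (t : ℝ) * (c₁ * ((X + cE) * Real.exp (-(ν * X)))) ≤ 1/2 := by
      calc (t : ℝ) * (c₁ * ((X + cE) * Real.exp (-(ν * X))))
          = (c₁ * (X + cE)) * Real.exp (-(δ * lt)) := e4
        _ ≤ ((1/2) * Real.exp (δ * lt)) * Real.exp (-(δ * lt)) := by
            apply mul_le_mul_of_nonneg_right _ (Real.exp_pos _).le
            rw [e5]; exact hE3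
        _ = 1/2 := by rw [mul_assoc, ← Real.exp_add]; simp
    have hhalf : ∀ ω ∈ {ω | (M ω : ℝ) > X}, (1/2 : ℝ) ≤ g t ω := by
      intro ω hω
      have hMX : X ≤ (M ω : ℝ) := le_of_lt hω
      have htp2 : (t : ℝ) * ((M ω : ℝ) * Real.exp (-((M ω : ℝ) - 1) * ν) * c₀) ≤ 1/2 :=
        le_trans (mul_le_mul_of_nonneg_left (hkeyub X (M ω) hX0 hMX) ht0.le) htp
      have hpmle := hple (M ω)
      have hexpM := Real.exp_pos (-(ν * (M ω : ℝ)))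
      have hber := one_add_mul_le_pow
        (a := -((M ω : ℝ) * Real.exp (-((M ω : ℝ) - 1) * ν) * c₀)) (by linarith) t
      simp only [hg]
      rw [sub_eq_add_neg]
      linarith [hber]
    have hPA := hE2.1
    have hI1 : (1/2) * (P {ω | (M ω : ℝ) > X}).toReal
        ≤ ∫ ω in {ω | (M ω : ℝ) > X}, g t ω ∂P :=
      setIntegral_ge_of_const_le_real hA (measure_ne_top P _) hhalf (hInt t).integrableOn
    have hI2 : (∫ ω in {ω | (M ω : ℝ) > X}, g t ω ∂P) ≤ ∫ ω, g t ω ∂P :=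
      setIntegral_le_integral (hInt t) (Eventually.of_forall (fun ω => (hgpos t ω).le))
    have hflow : (1/2) * Real.exp ((-α - δ) * X) ≤ ∫ ω, g t ω ∂P := by
      have := mul_le_mul_of_nonneg_left hPA (by norm_num : (0:ℝ) ≤ 1/2)
      linarith
    have hlog1 : Real.log ((1/2) * Real.exp ((-α - δ) * X))
        ≤ Real.log (∫ ω, g t ω ∂P) :=
      Real.log_le_log (by positivity) hflow
    have hlogval : Real.log ((1/2) * Real.exp ((-α - δ) * X))
        = -Real.log 2 + (-α - δ) * X := by
      rw [Real.log_mul (by norm_num) (Real.exp_ne_zero _), Real.log_exp, one_div,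
        Real.log_inv]
      try ring
    have h7 : -(α / ν) - (3/4) * ε ≤ ((-α - δ) * (1 + δ)) / ν :=
      coef1 α ε ν δ hν hε hδε hδδ
    have h8 : (-α - δ) * X = (((-α - δ) * (1 + δ)) / ν) * lt := by
      rw [hXdef]; ring
    have h9 : (-(α / ν) - (3/4) * ε) * lt ≤ (((-α - δ) * (1 + δ)) / ν) * lt :=
      mul_le_mul_of_nonneg_right h7 hlt0.le
    have hlog2 : Real.log 2 < (ε/4) * lt := by
      have h := le_trans (le_max_right _ _) hE4
      rw [div_le_iff₀ hε] at h
      have hl2 : (0:ℝ) < Real.log 2 := Real.log_pos (by norm_num)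
      linarith
    rw [lt_div_iff₀ hlt0]
    linarith [hlog1, hlogval, h8, h9, hlog2]
  -- SIDE 2 : upper bound
  have hb' : (0 : ℝ) < (1 - δ) / ν := by
    apply div_pos _ hν; linarith
  have hx2 : Tendsto (fun t : ℕ => ((1 - δ) / ν) * Real.log t) atTop atTop :=
    hlogt.const_mul_atTop hb'
  have side2 : ∀ᶠ t : ℕ in atTop,
      Real.log (∫ ω, g t ω ∂P) / Real.log t < -(α / ν) + ε := by
    have E2 := hx2.eventually htail'
    have E3 := hlogt.eventually
      (lin_le_exp δ c₀ ((α + δ) * ((1 - δ) / ν)) 0 hδ0 hc₀)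
    have E4 := hlogt.eventually (eventually_ge_atTop (max 1 (8 * Real.log 2 / ε)))
    have E5 := hx2.eventually (eventually_ge_atTop (1 : ℝ))
    filter_upwards [E2, E3, E4, E5, eventually_ge_atTop 1] with t hE2 hE3 hE4 hE5 ht1
    set lt := Real.log (t : ℝ) with hltdef
    set X := ((1 - δ) / ν) * lt with hXdef
    clear_value lt X
    have hlt1 : 1 ≤ lt := le_trans (le_max_left _ _) hE4
    have hlt0 : 0 < lt := lt_of_lt_of_le one_pos hlt1
    have hX1 : (1 : ℝ) ≤ X := hE5
    have hX0 : (0 : ℝ) ≤ X := by linarith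
    have ht0 : (0 : ℝ) < (t : ℝ) := by
      have : (1 : ℝ) ≤ (t : ℝ) := by exact_mod_cast ht1
      linarith
    have hexplt : Real.exp lt = (t : ℝ) := by rw [hltdef]; exact Real.exp_log ht0
    have hνX : ν * X = (1 - δ) * lt := by
      rw [hXdef]; field_simp
    have hA : MeasurableSet {ω | (M ω : ℝ) > X} :=
      measurableSet_lt measurable_const (measurable_from_top.comp hMm)
    have hexpX1 : Real.exp (-(ν * X)) ≤ 1 := by
      rw [← Real.exp_zero]
      apply Real.exp_le_exp.mpr
      nlinarith [mul_nonneg hν.le hX0]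
    have hβ0 : 0 ≤ 1 - c₀ * Real.exp (-(ν * X)) := by
      nlinarith [Real.exp_pos (-(ν * X))]
    -- pointwise bound
    have hpt : ∀ ω, g t ω ≤ (1 - c₀ * Real.exp (-(ν * X))) ^ t
        + Set.indicator {ω | (M ω : ℝ) > X} (fun _ => (1:ℝ)) ω := by
      intro ω
      by_cases hω : ω ∈ {ω | (M ω : ℝ) > X}
      · rw [Set.indicator_of_mem hω]
        have h1 := hgle1 t ω
        have h2 : 0 ≤ (1 - c₀ * Real.exp (-(ν * X))) ^ t := pow_nonneg hβ0 t
        linarith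
      · rw [Set.indicator_of_notMem hω, add_zero]
        have hMle : (M ω : ℝ) ≤ X := le_of_not_gt hω
        have h6 := hpge X (M ω) (hMpos ω) hMle
        simp only [hg]
        apply pow_le_pow_left₀
        · have := hple (M ω)
          have := Real.exp_pos (-(ν * (M ω : ℝ)))
          linarith
        · linarith
    have hIub : (∫ ω, g t ω ∂P)
        ≤ (1 - c₀ * Real.exp (-(ν * X))) ^ t + (P {ω | (M ω : ℝ) > X}).toReal := by
      have hind : Integrable (Set.indicator {ω | (M ω : ℝ) > X} (fun _ => (1:ℝ))) P :=
        (integrable_const (1:ℝ)).indicator hA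
      calc (∫ ω, g t ω ∂P)
          ≤ ∫ ω, ((1 - c₀ * Real.exp (-(ν * X))) ^ t
              + Set.indicator {ω | (M ω : ℝ) > X} (fun _ => (1:ℝ)) ω) ∂P :=
            integral_mono (hInt t) ((integrable_const _).add hind) hpt
        _ = (1 - c₀ * Real.exp (-(ν * X))) ^ t + (P {ω | (M ω : ℝ) > X}).toReal := by
            rw [integral_add (integrable_const _) hind, integral_const,
              integral_indicator_const _ hA]
            simp
            rfl
    have hb1 : 1 - c₀ * Real.exp (-(ν * X))
        ≤ Real.exp (-(c₀ * Real.exp (-(ν * X)))) := by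
      linarith [Real.add_one_le_exp (-(c₀ * Real.exp (-(ν * X))))]
    have hb2 : (1 - c₀ * Real.exp (-(ν * X))) ^ t
        ≤ Real.exp (-(c₀ * Real.exp (-(ν * X)))) ^ t := pow_le_pow_left₀ hβ0 hb1 t
    have hb3 : Real.exp (-(c₀ * Real.exp (-(ν * X)))) ^ t
        = Real.exp ((t : ℝ) * -(c₀ * Real.exp (-(ν * X)))) := (Real.exp_nat_mul _ t).symm
    have e7 : Real.exp lt * Real.exp (-(ν * X)) = Real.exp (δ * lt) := by
      rw [← Real.exp_add]; congr 1; rw [hνX]; ring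
    have e6 : (t : ℝ) * (c₀ * Real.exp (-(ν * X))) = c₀ * Real.exp (δ * lt) := by
      rw [← hexplt, ← e7]; ring
    have hcomp : (α + δ) * X ≤ c₀ * Real.exp (δ * lt) := by
      have e8 : (α + δ) * X = (α + δ) * ((1 - δ) / ν) * lt := by rw [hXdef]; ring
      have := hE3
      rw [add_zero] at this
      linarith [e8 ▸ this]
    have hb4 : (1 - c₀ * Real.exp (-(ν * X))) ^ t ≤ Real.exp ((-α - δ) * X) := by
      calc (1 - c₀ * Real.exp (-(ν * X))) ^ t
          ≤ Real.exp ((t : ℝ) * -(c₀ * Real.exp (-(ν * X)))) := hb3 ▸ hb2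
        _ ≤ Real.exp ((-α - δ) * X) := by
            apply Real.exp_le_exp.mpr
            have : (t : ℝ) * -(c₀ * Real.exp (-(ν * X))) = -(c₀ * Real.exp (δ * lt)) := by
              rw [← e6]; ring
            rw [this]
            linarith
    have hb5 : (1 - c₀ * Real.exp (-(ν * X))) ^ t ≤ (P {ω | (M ω : ℝ) > X}).toReal :=
      le_trans hb4 hE2.1
    have hub : (∫ ω, g t ω ∂P) ≤ 2 * Real.exp ((-α + δ) * X) := by
      have := hE2.2
      linarith
    have hlogub : Real.log (∫ ω, g t ω ∂P) ≤ Real.log 2 + (-α + δ) * X := by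
      calc Real.log (∫ ω, g t ω ∂P)
          ≤ Real.log (2 * Real.exp ((-α + δ) * X)) := Real.log_le_log (hfpos t) hub
        _ = Real.log 2 + (-α + δ) * X := by
            rw [Real.log_mul two_ne_zero (Real.exp_ne_zero _), Real.log_exp]
    have h7 : ((-α + δ) * (1 - δ)) / ν ≤ -(α / ν) + (3/4) * ε :=
      coef2 α ε ν δ hν hε hδε hδ0.le
    have h8 : (-α + δ) * X = (((-α + δ) * (1 - δ)) / ν) * lt := by
      rw [hXdef]; ring
    have h9 : (((-α + δ) * (1 - δ)) / ν) * lt ≤ (-(α / ν) + (3/4) * ε) * lt :=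
      mul_le_mul_of_nonneg_right h7 hlt0.le
    have hlog2 : Real.log 2 < (ε/4) * lt := by
      have h := le_trans (le_max_right _ _) hE4
      rw [div_le_iff₀ hε] at h
      have hl2 : (0:ℝ) < Real.log 2 := Real.log_pos (by norm_num)
      linarith
    rw [div_lt_iff₀ hlt0]
    linarith [hlogub, h8, h9, hlog2]
  filter_upwards [side1, side2] with t h1 h2
  rw [Real.dist_eq, abs_lt]
  constructor <;> [linarith; linarith]
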